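/- The complement in ℕ of the additive submonoid ⟨F_1 ∪ F_2⟩ generated by F_1 ∪ F_2 has exactly g = q_0(q−1) elements; that is, ⟨F_1 ∪ F_2⟩ is a numerical semigroup of genus g. -/

import Mathlib

/-- `q₀ = 2^s`. -/
def q0 (s : ℕ) : ℕ := 2 ^ s

/-- `q = 2 q₀²`. -/
def qS (s : ℕ) : ℕ := 2 * q0 s ^ 2

/-- `m_{j,k,ℓ} = ⌈(q₀/(q₀−1))·(j + k + ℓ − (k+ℓ)/q)⌉`. -/
def mval (s j k l : ℕ) : ℤ :=
  ⌈((q0 s : ℚ) / ((q0 s : ℚ) - 1)) *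
    ((j : ℚ) + (k : ℚ) + (l : ℚ) - ((k : ℚ) + (l : ℚ)) / (qS s : ℚ))⌉

/-- `F₁ = { hq − (ℓ+2k)q₀ − j : ℓ ∈ {0,1}, k,j ∈ {0,…,q₀−1},
    h ∈ {max{1, m_{j,k,ℓ}},…,2q₀} }`. -/
def F1 (s : ℕ) : Set ℕ :=
  {n | ∃ h j k l : ℕ, l ≤ 1 ∧ k < q0 s ∧ j < q0 s ∧
    max 1 (mval s j k l) ≤ (h : ℤ) ∧ h ≤ 2 * q0 s ∧
    n = h * qS s - (l + 2 * k) * q0 s - j}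

/-- `F₂ = { hq − (2h−2q₀−1)q₀ − (q₀−1) : h ∈ {q₀+1,…,2q₀} }`. -/
def F2 (s : ℕ) : Set ℕ :=
  {n | ∃ h : ℕ, q0 s + 1 ≤ h ∧ h ≤ 2 * q0 s ∧
    n = h * qS s - (2 * h - 2 * q0 s - 1) * q0 s - (q0 s - 1)}

/-- `G₁ = { hq − kq₀ − ⌊(2h−k−2)/2⌋ : h ∈ {1,…,q₀}, k ∈ {0,…,2h−2} }`. -/
def G1 (s : ℕ) : Set ℕ :=
  {n | ∃ h k : ℕ, 1 ≤ h ∧ h ≤ q0 s ∧ k ≤ 2 * h - 2 ∧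
    n = h * qS s - k * q0 s - (2 * h - k - 2) / 2}

namespace Suz

/-- "digit sum" `t(d) = j + k + ℓ` for `d = (ℓ+2k)q₀+j`. -/
def tv (s d : ℕ) : ℕ := d % q0 s + (d / q0 s + 1) / 2

/-- The `F₂`-exceptional condition `j = q₀−1 ∧ ℓ = 1`. -/
def Fc (s d : ℕ) : Prop := d % q0 s = q0 s - 1 ∧ (d / q0 s) % 2 = 1

instance (s d : ℕ) : Decidable (Fc s d) := by unfold Fc; infer_instance

/-- smallest `h` such that `h q − d` is in the semigroup. -/
def Hv (s d : ℕ) : ℕ := if tv s d < q0 s ∨ Fc s d then tv s d + 1 else tv s d + 2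

/-- The semigroup, explicitly. -/
def Sset (s : ℕ) : Set ℕ :=
  {n | n = 0 ∨ ∃ h d : ℕ, d < qS s ∧ Hv s d ≤ h ∧ n + d = h * qS s}

lemma q0_pos (s : ℕ) : 0 < q0 s := Nat.pow_pos (by norm_num)

lemma q0_two (s : ℕ) (hs : 1 ≤ s) : 2 ≤ q0 s := by
  have : 2 ^ 1 ≤ 2 ^ s := Nat.pow_le_pow_right (by norm_num) hs
  simpa [q0] using this

lemma qS_eq (s : ℕ) : qS s = 2 * q0 s * q0 s := by rw [qS]; ring

lemma tv_wj (s : ℕ) (w j : ℕ) (hj : j < q0 s) :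
    tv s (w * q0 s + j) = j + (w + 1) / 2 := by
  have h0 := q0_pos s
  unfold tv
  rw [add_comm (w * q0 s) j, Nat.add_mul_mod_self_right, Nat.mod_eq_of_lt hj,
    Nat.add_mul_div_right _ _ h0, Nat.div_eq_of_lt hj]
  omega

lemma tv_jkl (s : ℕ) (j k l : ℕ) (hj : j < q0 s) (hl : l ≤ 1) :
    tv s ((l + 2 * k) * q0 s + j) = j + k + l := by
  rw [tv_wj s _ j hj]; omega

lemma Fc_jkl (s : ℕ) (j k l : ℕ) (hj : j < q0 s) (hl : l ≤ 1) :
    Fc s ((l + 2 * k) * q0 s + j) ↔ (j = q0 s - 1 ∧ l = 1) := by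
  have h0 := q0_pos s
  unfold Fc
  rw [add_comm ((l + 2 * k) * q0 s) j, Nat.add_mul_mod_self_right, Nat.mod_eq_of_lt hj,
    Nat.add_mul_div_right _ _ h0, Nat.div_eq_of_lt hj]
  omega

/-- decomposition of `d < q`. -/
lemma decomp (s : ℕ) (d : ℕ) (hd : d < qS s) :
    ∃ j k l : ℕ, j < q0 s ∧ k < q0 s ∧ l ≤ 1 ∧ d = (l + 2 * k) * q0 s + j := by
  have h0 := q0_pos s
  refine ⟨d % q0 s, d / q0 s / 2, d / q0 s % 2, Nat.mod_lt _ h0, ?_, ?_, ?_⟩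
  · have hw : d / q0 s < 2 * q0 s := by
      rw [Nat.div_lt_iff_lt_mul h0]
      calc d < qS s := hd
      _ = 2 * q0 s * q0 s := qS_eq s
    omega
  · omega
  · have h1 : d / q0 s % 2 + 2 * (d / q0 s / 2) = d / q0 s := by omega
    rw [h1, add_comm, Nat.mod_add_div' d (q0 s)]



section MvalBounds

variable (s j k l : ℕ)

private lemma qS_cast (s : ℕ) : (qS s : ℚ) = 2 * (q0 s : ℚ) ^ 2 := by
  unfold qS; push_cast; ring

private lemma mval_repr (h2 : 2 ≤ q0 s) :
    ((q0 s : ℚ) / ((q0 s : ℚ) - 1)) *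
      (((j : ℚ) + (k : ℚ) + (l : ℚ)) - ((k : ℚ) + (l : ℚ)) / (qS s : ℚ))
    = (2 * (q0 s : ℚ) ^ 2 * ((j : ℚ) + (k : ℚ) + (l : ℚ)) - ((k : ℚ) + (l : ℚ))) /
        (((q0 s : ℚ) - 1) * (2 * (q0 s : ℚ))) := by
  have ha : (2 : ℚ) ≤ (q0 s : ℚ) := by exact_mod_cast h2
  have h0 : (q0 s : ℚ) ≠ 0 := by linarith
  have h1 : (q0 s : ℚ) - 1 ≠ 0 := by intro h; nlinarith
  rw [qS_cast]
  field_simp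

private lemma denom_pos (h2 : 2 ≤ q0 s) :
    0 < ((q0 s : ℚ) - 1) * (2 * (q0 s : ℚ)) := by
  have ha : (2 : ℚ) ≤ (q0 s : ℚ) := by exact_mod_cast h2
  nlinarith

lemma mval_ge1 (h2 : 2 ≤ q0 s) (ht : 1 ≤ j + k + l) :
    ((j + k + l : ℕ) : ℤ) + 1 ≤ mval s j k l := by
  have ha : (2 : ℚ) ≤ (q0 s : ℚ) := by exact_mod_cast h2
  have ht' : (1 : ℚ) ≤ (j : ℚ) + (k : ℚ) + (l : ℚ) := by
    have : ((1:ℕ):ℚ) ≤ ((j+k+l : ℕ) : ℚ) := by exact_mod_cast ht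
    push_cast at this ⊢; linarith
  have h : (((j + k + l : ℕ) : ℤ) : ℚ) <
      ((q0 s : ℚ) / ((q0 s : ℚ) - 1)) *
        (((j : ℚ) + (k : ℚ) + (l : ℚ)) - ((k : ℚ) + (l : ℚ)) / (qS s : ℚ)) := by
    rw [mval_repr s j k l h2, lt_div_iff₀ (denom_pos s h2)]
    push_cast
    nlinarith [ht']
  have := Int.lt_ceil.mpr h
  unfold mval
  omega

lemma mval_ge2 (h2 : 2 ≤ q0 s) (ht : q0 s ≤ j + k + l) (hk : k < q0 s) (hl : l ≤ 1) :
    ((j + k + l : ℕ) : ℤ) + 2 ≤ mval s j k l := by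
  have ha : (2 : ℚ) ≤ (q0 s : ℚ) := by exact_mod_cast h2
  have ht' : (q0 s : ℚ) ≤ (j : ℚ) + (k : ℚ) + (l : ℚ) := by exact_mod_cast ht
  have hu : (k : ℚ) + (l : ℚ) ≤ (q0 s : ℚ) := by
    have : k + l ≤ q0 s := by omega
    exact_mod_cast this
  have h : (((j + k + l : ℕ) : ℤ) : ℚ) + 1 <
      ((q0 s : ℚ) / ((q0 s : ℚ) - 1)) *
        (((j : ℚ) + (k : ℚ) + (l : ℚ)) - ((k : ℚ) + (l : ℚ)) / (qS s : ℚ)) := by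
    rw [mval_repr s j k l h2, lt_div_iff₀ (denom_pos s h2)]
    push_cast
    nlinarith [ht', hu]
  have h2' : (((j + k + l : ℕ) : ℤ) + 1 : ℤ) < mval s j k l := by
    unfold mval
    rw [Int.lt_ceil]
    push_cast
    push_cast at h
    linarith
  omega

lemma mval_le1 (h2 : 2 ≤ q0 s) (ht : j + k + l + 1 ≤ q0 s) :
    mval s j k l ≤ ((j + k + l : ℕ) : ℤ) + 1 := by
  have ha : (2 : ℚ) ≤ (q0 s : ℚ) := by exact_mod_cast h2
  have ht' : (j : ℚ) + (k : ℚ) + (l : ℚ) + 1 ≤ (q0 s : ℚ) := by exact_mod_cast ht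
  unfold mval
  rw [Int.ceil_le]
  rw [mval_repr s j k l h2, div_le_iff₀ (denom_pos s h2)]
  push_cast
  nlinarith [ht', Nat.cast_nonneg (α := ℚ) k, Nat.cast_nonneg (α := ℚ) l]

lemma mval_le2 (h2 : 2 ≤ q0 s) (ht : j + k + l + 2 ≤ 2 * q0 s) :
    mval s j k l ≤ ((j + k + l : ℕ) : ℤ) + 2 := by
  have ha : (2 : ℚ) ≤ (q0 s : ℚ) := by exact_mod_cast h2
  have ht' : (j : ℚ) + (k : ℚ) + (l : ℚ) + 2 ≤ 2 * (q0 s : ℚ) := by exact_mod_cast ht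
  unfold mval
  rw [Int.ceil_le]
  rw [mval_repr s j k l h2, div_le_iff₀ (denom_pos s h2)]
  push_cast
  nlinarith [ht', Nat.cast_nonneg (α := ℚ) k, Nat.cast_nonneg (α := ℚ) l]

end MvalBounds

/-- helper: compare multiples. -/
private lemma lt_mul_helper {a b c j : ℕ} (hj : j < c) (h : b * c ≤ a * c + j) : b ≤ a := by
  have hc : 0 < c := by omega
  have : b * c < (a + 1) * c := by
    calc b * c ≤ a * c + j := h
    _ < (a + 1) * c := by rw [add_mul, one_mul]; omega
  exact Nat.lt_succ_iff.mp (Nat.lt_of_mul_lt_mul_right this)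

private lemma mul_add_lt {a b c j : ℕ} (hab : a < b) (hj : j < c) : a * c + j < b * c := by
  calc a * c + j < a * c + c := by omega
  _ = (a + 1) * c := by rw [add_mul, one_mul]
  _ ≤ b * c := Nat.mul_le_mul_right c hab

/-- Key subadditivity of `tv`. -/
lemma tv_add (s : ℕ) (h2 : 2 ≤ q0 s) (d1 d2 : ℕ) (hd1 : d1 < qS s) (hd2 : d2 < qS s) :
    (d1 + d2 < qS s ∧ tv s (d1 + d2) ≤ tv s d1 + tv s d2) ∨
    (qS s ≤ d1 + d2 ∧ tv s (d1 + d2 - qS s) + 2 ≤ tv s d1 + tv s d2) := by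
  obtain ⟨j1, k1, l1, hj1, hk1, hl1, he1⟩ := decomp s d1 hd1
  obtain ⟨j2, k2, l2, hj2, hk2, hl2, he2⟩ := decomp s d2 hd2
  set Q := q0 s with hQ
  set w1 := l1 + 2 * k1 with hw1
  set w2 := l2 + 2 * k2 with hw2
  have ht1 : tv s d1 = j1 + (w1 + 1) / 2 := by rw [he1]; exact tv_wj s w1 j1 hj1
  have ht2 : tv s d2 = j2 + (w2 + 1) / 2 := by rw [he2]; exact tv_wj s w2 j2 hj2
  have hqs : qS s = 2 * Q * Q := qS_eq s
  by_cases hc : d1 + d2 < qS s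
  · left
    refine ⟨hc, ?_⟩
    by_cases hjj : j1 + j2 < Q
    · have he : d1 + d2 = (w1 + w2) * Q + (j1 + j2) := by
        have h' : (w1 + w2) * Q = w1 * Q + w2 * Q := by ring
        omega
      rw [he, tv_wj s _ _ hjj, ht1, ht2]
      omega
    · have he : d1 + d2 = (w1 + w2 + 1) * Q + (j1 + j2 - Q) := by
        have h' : (w1 + w2 + 1) * Q = w1 * Q + w2 * Q + Q := by ring
        omega
      rw [he, tv_wj s _ _ (by omega), ht1, ht2]
      omega
  · right
    push_neg at hc
    refine ⟨hc, ?_⟩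
    by_cases hjj : j1 + j2 < Q
    · have hsum : d1 + d2 = (w1 + w2) * Q + (j1 + j2) := by
        have h' : (w1 + w2) * Q = w1 * Q + w2 * Q := by ring
        omega
      have hW : 2 * Q ≤ w1 + w2 := by
        refine lt_mul_helper (c := Q) (j := j1 + j2) hjj ?_
        have : 2 * Q * Q = qS s := hqs.symm
        omega
      obtain ⟨V, hV⟩ : ∃ V, w1 + w2 = 2 * Q + V := ⟨w1 + w2 - 2 * Q, by omega⟩
      have he : d1 + d2 - qS s = V * Q + (j1 + j2) := by
        have h' : (w1 + w2) * Q = 2 * Q * Q + V * Q := by rw [hV]; ring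
        omega
      rw [he, tv_wj s _ _ hjj, ht1, ht2]
      omega
    · have hsum : d1 + d2 = (w1 + w2 + 1) * Q + (j1 + j2 - Q) := by
        have h' : (w1 + w2 + 1) * Q = w1 * Q + w2 * Q + Q := by ring
        omega
      have hW : 2 * Q ≤ w1 + w2 + 1 := by
        refine lt_mul_helper (c := Q) (j := j1 + j2 - Q) (by omega) ?_
        have : 2 * Q * Q = qS s := hqs.symm
        omega
      obtain ⟨V, hV⟩ : ∃ V, w1 + w2 + 1 = 2 * Q + V := ⟨w1 + w2 + 1 - 2 * Q, by omega⟩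
      have he : d1 + d2 - qS s = V * Q + (j1 + j2 - Q) := by
        have h' : (w1 + w2 + 1) * Q = 2 * Q * Q + V * Q := by rw [hV]; ring
        omega
      rw [he, tv_wj s _ _ (by omega), ht1, ht2]
      omega

lemma Hv_ge (s d : ℕ) : tv s d + 1 ≤ Hv s d := by unfold Hv; split <;> omega

lemma Hv_le (s d : ℕ) : Hv s d ≤ tv s d + 2 := by unfold Hv; split <;> omega

lemma Sset_zero (s : ℕ) : 0 ∈ Sset s := Or.inl rfl

lemma Sset_add (s : ℕ) (h2 : 2 ≤ q0 s) {a b : ℕ} (ha : a ∈ Sset s) (hb : b ∈ Sset s) :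
    a + b ∈ Sset s := by
  rcases ha with rfl | ⟨h1, d1, hd1, hH1, he1⟩
  · simpa using hb
  rcases hb with rfl | ⟨h2', d2, hd2, hH2, he2⟩
  · rw [add_zero]; exact Or.inr ⟨h1, d1, hd1, hH1, he1⟩
  have t1 := Hv_ge s d1
  have t2 := Hv_ge s d2
  rcases tv_add s h2 d1 d2 hd1 hd2 with ⟨hlt, htt⟩ | ⟨hge, htt⟩
  · refine Or.inr ⟨h1 + h2', d1 + d2, hlt, ?_, ?_⟩
    · have := Hv_le s (d1 + d2)
      omega
    · have e : (h1 + h2') * qS s = h1 * qS s + h2' * qS s := by ring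
      omega
  · refine Or.inr ⟨h1 + h2' - 1, d1 + d2 - qS s, by omega, ?_, ?_⟩
    · have := Hv_le s (d1 + d2 - qS s)
      omega
    · have hq : 0 < qS s := by rw [qS_eq]; positivity
      have h1p : 1 ≤ h1 := by omega
      have e : h1 * qS s + h2' * qS s = (h1 + h2' - 1) * qS s + qS s := by
        have e2 : (h1 + h2' - 1) * qS s + qS s = (h1 + h2' - 1 + 1) * qS s := by ring
        have e3 : h1 + h2' - 1 + 1 = h1 + h2' := by omega
        rw [e2, e3, add_mul]
      omega

lemma q_le_mul {h q : ℕ} (h1 : 1 ≤ h) : q ≤ h * q :=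
  le_trans (by omega : q ≤ 1 * q) (Nat.mul_le_mul_right q h1)

lemma F1_sub (s : ℕ) (h2 : 2 ≤ q0 s) : F1 s ⊆ Sset s := by
  rintro n ⟨h, j, k, l, hl, hk, hj, hm, hh2q, rfl⟩
  set Q := q0 s with hQ
  set d := (l + 2 * k) * Q + j with hdd
  have hd : d < qS s := by
    have h' : d < 2 * Q * Q := mul_add_lt (by omega) hj
    have hqq : qS s = 2 * Q * Q := by rw [hQ]; exact qS_eq s
    omega
  have h1le : 1 ≤ h := by
    have : (1 : ℤ) ≤ (h : ℤ) := le_trans (le_max_left _ _) hm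
    exact_mod_cast this
  have htv : tv s d = j + k + l := tv_jkl s j k l hj hl
  have hHv : Hv s d ≤ h := by
    by_cases ht0 : j + k + l = 0
    · have hb : tv s d < Q := by omega
      have : Hv s d = tv s d + 1 := by unfold Hv; rw [if_pos (Or.inl hb)]
      omega
    · have hmh : mval s j k l ≤ (h : ℤ) := le_trans (le_max_right _ _) hm
      by_cases hb : tv s d < Q ∨ Fc s d
      · have hHe : Hv s d = tv s d + 1 := by unfold Hv; rw [if_pos hb]
        have hg := mval_ge1 s j k l h2 (by omega)
        have hc : ((j + k + l : ℕ) : ℤ) + 1 ≤ (h : ℤ) := le_trans hg hmh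
        have hc' : j + k + l + 1 ≤ h := by exact_mod_cast hc
        omega
      · have hHe : Hv s d = tv s d + 2 := by unfold Hv; rw [if_neg hb]
        push_neg at hb
        have hq0le : Q ≤ j + k + l := by omega
        have hg := mval_ge2 s j k l h2 hq0le hk hl
        have hc : ((j + k + l : ℕ) : ℤ) + 2 ≤ (h : ℤ) := le_trans hg hmh
        have hc' : j + k + l + 2 ≤ h := by exact_mod_cast hc
        omega
  refine Or.inr ⟨h, d, hd, hHv, ?_⟩
  have hq : qS s ≤ h * qS s := q_le_mul h1le
  omega

lemma F2_sub (s : ℕ) (h2 : 2 ≤ q0 s) : F2 s ⊆ Sset s := by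
  rintro n ⟨h, hh1, hh2, rfl⟩
  set Q := q0 s with hQ
  set k := h - Q - 1 with hk'
  have hk : k < Q := by omega
  have hj : Q - 1 < Q := by omega
  set d := (1 + 2 * k) * Q + (Q - 1) with hdd
  have hd : d < qS s := by
    have h' : d < 2 * Q * Q := mul_add_lt (by omega) hj
    have hqq : qS s = 2 * Q * Q := by rw [hQ]; exact qS_eq s
    omega
  have htv : tv s d = (Q - 1) + k + 1 := tv_jkl s (Q - 1) k 1 hj le_rfl
  have hFc : Fc s d := (Fc_jkl s (Q - 1) k 1 hj le_rfl).mpr ⟨rfl, rfl⟩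
  have hHv : Hv s d = tv s d + 1 := by unfold Hv; rw [if_pos (Or.inr hFc)]
  have hco : 2 * h - 2 * Q - 1 = 1 + 2 * k := by omega
  rw [hco]
  refine Or.inr ⟨h, d, hd, by omega, ?_⟩
  have hq : qS s ≤ h * qS s := q_le_mul (by omega)
  omega

lemma q_mem (s : ℕ) (h2 : 2 ≤ q0 s) : qS s ∈ F1 s := by
  refine ⟨1, 0, 0, 0, by omega, by omega, by omega, ?_, by omega, by simp⟩
  have : mval s 0 0 0 = 0 := by
    unfold mval
    norm_num
  rw [this]
  norm_num

/-- the Apéry-style generator in each residue class. -/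
lemma W_mem (s : ℕ) (h2 : 2 ≤ q0 s) (d : ℕ) (hd : d < qS s) :
    ∃ W ∈ F1 s ∪ F2 s, W + d = Hv s d * qS s := by
  obtain ⟨j, k, l, hj, hk, hl, rfl⟩ := decomp s d hd
  set Q := q0 s with hQ
  have htv : tv s ((l + 2 * k) * Q + j) = j + k + l := tv_jkl s j k l hj hl
  have hq : qS s ≤ Hv s ((l + 2 * k) * Q + j) * qS s := q_le_mul (by have := Hv_ge s ((l + 2 * k) * Q + j); omega)
  by_cases hFc : Fc s ((l + 2 * k) * Q + j)
  · obtain ⟨hj', hl'⟩ := (Fc_jkl s j k l hj hl).mp hFc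
    have hHv : Hv s ((l + 2 * k) * Q + j) = j + k + l + 1 := by
      unfold Hv; rw [if_pos (Or.inr hFc)]; omega
    set h := Hv s ((l + 2 * k) * Q + j) with hh
    refine ⟨h * qS s - (2 * h - 2 * Q - 1) * Q - (Q - 1), Or.inr ⟨h, by omega, by omega, rfl⟩, ?_⟩
    have hco : (2 * h - 2 * Q - 1) = l + 2 * k := by omega
    rw [hco]
    omega
  · have hb : Hv s ((l + 2 * k) * Q + j) ≤ 2 * Q ∧
        mval s j k l ≤ (Hv s ((l + 2 * k) * Q + j) : ℤ) := by
      by_cases hlt : tv s ((l + 2 * k) * Q + j) < Q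
      · have hHv : Hv s ((l + 2 * k) * Q + j) = j + k + l + 1 := by
          unfold Hv; rw [if_pos (Or.inl hlt)]; omega
        have := mval_le1 s j k l h2 (by omega)
        constructor
        · omega
        · rw [hHv]; push_cast; push_cast at this; omega
      · have hnot : ¬(tv s ((l + 2 * k) * Q + j) < Q ∨ Fc s ((l + 2 * k) * Q + j)) := by
          tauto
        have hHv : Hv s ((l + 2 * k) * Q + j) = j + k + l + 2 := by
          unfold Hv; rw [if_neg hnot]; omega
        have hFc' : ¬(j = Q - 1 ∧ l = 1) := fun hc => hFc ((Fc_jkl s j k l hj hl).mpr hc)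
        have ht2 : j + k + l + 2 ≤ 2 * Q := by
          rcases Nat.eq_or_lt_of_le hl with hl1 | hl0 <;> omega
        have := mval_le2 s j k l h2 ht2
        constructor
        · omega
        · rw [hHv]; push_cast; push_cast at this; omega
    set h := Hv s ((l + 2 * k) * Q + j) with hh
    refine ⟨h * qS s - (l + 2 * k) * Q - j, Or.inl ⟨h, j, k, l, hl, hk, hj, ?_, hb.1, rfl⟩, ?_⟩
    · have h1 : (1 : ℤ) ≤ (h : ℤ) := by
        have := Hv_ge s ((l + 2 * k) * Q + j); exact_mod_cast by omega
      exact max_le h1 hb.2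
    · omega

lemma closure_eq (s : ℕ) (h2 : 2 ≤ q0 s) :
    (AddSubmonoid.closure (F1 s ∪ F2 s) : Set ℕ) = Sset s := by
  apply Set.Subset.antisymm
  · intro n hn
    induction hn using AddSubmonoid.closure_induction with
    | mem x hx => exact hx.elim (fun h => F1_sub s h2 h) (fun h => F2_sub s h2 h)
    | zero => exact Sset_zero s
    | add a b _ _ ha hb => exact Sset_add s h2 ha hb
  · rintro n (rfl | ⟨h, d, hd, hH, he⟩)
    · exact zero_mem _
    · obtain ⟨W, hW, hWe⟩ := W_mem s h2 d hd
      have hqmem : qS s ∈ AddSubmonoid.closure (F1 s ∪ F2 s) :=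
        AddSubmonoid.subset_closure (Or.inl (q_mem s h2))
      have hWmem : W ∈ AddSubmonoid.closure (F1 s ∪ F2 s) :=
        AddSubmonoid.subset_closure hW
      have hrep : n = W + (h - Hv s d) * qS s := by
        have e1 : h * qS s = Hv s d * qS s + (h - Hv s d) * qS s := by
          rw [← add_mul]; congr 1; omega
        omega
      rw [hrep]
      refine AddSubmonoid.add_mem _ hWmem ?_
      simpa [smul_eq_mul] using AddSubmonoid.nsmul_mem _ hqmem (h - Hv s d)

def gapD (s d : ℕ) : Finset ℕ := (Finset.Ico 1 (Hv s d)).image (fun i => i * qS s - d)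

def gapF (s : ℕ) : Finset ℕ := (Finset.range (qS s)).biUnion (gapD s)

lemma qS_pos (s : ℕ) : 0 < qS s := by
  have := q0_pos s
  rw [qS_eq]
  positivity

/-- cancellation of representations. -/
private lemma cancel_q (s : ℕ) {i i' d d' : ℕ} (hd : d < qS s) (hd' : d' < qS s)
    (hi : 1 ≤ i) (hi' : 1 ≤ i') (h : i * qS s + d' = i' * qS s + d) : i = i' ∧ d = d' := by
  rcases le_total i i' with hle | hle
  · have e1 : i' * qS s = i * qS s + (i' - i) * qS s := by rw [← add_mul]; congr 1; omega
    by_cases hgt : i < i'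
    · have := q_le_mul (q := qS s) (show 1 ≤ i' - i by omega)
      omega
    · have : i = i' := by omega
      subst this
      omega
  · have e1 : i * qS s = i' * qS s + (i - i') * qS s := by rw [← add_mul]; congr 1; omega
    by_cases hgt : i' < i
    · have := q_le_mul (q := qS s) (show 1 ≤ i - i' by omega)
      omega
    · have : i = i' := by omega
      subst this
      omega

lemma Hv_zero (s : ℕ) : Hv s 0 = 1 := by
  have h0 := q0_pos s
  have ht : tv s 0 = 0 := by unfold tv; simp
  unfold Hv
  rw [if_pos (Or.inl (by omega)), ht]

lemma gap_notin (s : ℕ) {d i n : ℕ} (hd : d < qS s) (hi1 : 1 ≤ i) (hiH : i < Hv s d)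
    (hn : n + d = i * qS s) : n ∉ Sset s := by
  intro hmem
  have hq : qS s ≤ i * qS s := q_le_mul hi1
  rcases hmem with h0 | ⟨h', d', hd', hH', he'⟩
  · rw [h0] at hn
    omega
  · have hh1 : 1 ≤ h' := by have := Hv_ge s d'; omega
    have heq : i * qS s + d' = h' * qS s + d := by
      set A := i * qS s with hA
      set B := h' * qS s with hB
      omega
    obtain ⟨hii, hdd⟩ := cancel_q s hd hd' hi1 hh1 heq
    subst hii
    subst hdd
    omega

lemma compl_eq (s : ℕ) (h2 : 2 ≤ q0 s) : (Sset s)ᶜ = ↑(gapF s) := by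
  ext n
  simp only [Set.mem_compl_iff, Finset.mem_coe,
    Finset.mem_range, gapF, Finset.mem_biUnion, gapD, Finset.mem_image, Finset.mem_Ico]
  constructor
  · intro hnS
    have hq := qS_pos s
    have hn0 : n ≠ 0 := fun h => hnS (h ▸ Sset_zero s)
    obtain ⟨m, r, hmr, hrlt⟩ : ∃ m r, n = m * qS s + r ∧ r < qS s :=
      ⟨n / qS s, n % qS s, by rw [mul_comm]; exact (Nat.div_add_mod n (qS s)).symm,
        Nat.mod_lt n hq⟩
    have hr : r ≠ 0 := by
      intro h0
      apply hnS
      refine Or.inr ⟨m, 0, hq, ?_, by omega⟩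
      rw [Hv_zero]
      by_contra hc
      have hm0 : m = 0 := by omega
      rw [hm0] at hmr
      simp at hmr
      omega
    have e2 : (m + 1) * qS s = m * qS s + qS s := by ring
    refine ⟨qS s - r, by omega, m + 1, ⟨by omega, ?_⟩, by omega⟩
    by_contra hc
    push_neg at hc
    exact hnS (Or.inr ⟨m + 1, qS s - r, by omega, hc, by omega⟩)
  · rintro ⟨d, hd, i, ⟨hi1, hiH⟩, rfl⟩
    have hq : qS s ≤ i * qS s := q_le_mul hi1
    exact gap_notin s hd hi1 hiH (by omega)

lemma card_gapD (s : ℕ) {d : ℕ} (hd : d < qS s) : (gapD s d).card = Hv s d - 1 := by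
  rw [gapD, Finset.card_image_of_injOn, Nat.card_Ico]
  intro i hi i' hi' hee
  simp only [Finset.coe_Ico, Set.mem_Ico] at hi hi'
  have hq1 : qS s ≤ i * qS s := q_le_mul hi.1
  have hq2 : qS s ≤ i' * qS s := q_le_mul hi'.1
  have hAB : i * qS s = i' * qS s := by
    have hee' : i * qS s - d = i' * qS s - d := hee
    set A := i * qS s with hA
    set B := i' * qS s with hB
    omega
  exact Nat.eq_of_mul_eq_mul_right (qS_pos s) hAB

lemma card_gapF (s : ℕ) : (gapF s).card = ∑ d ∈ Finset.range (qS s), (Hv s d - 1) := by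
  rw [gapF, Finset.card_biUnion]
  · exact Finset.sum_congr rfl fun d hd => card_gapD s (Finset.mem_range.mp hd)
  · intro d1 h1 d2 h2 hne
    simp only [Finset.coe_range, Set.mem_Iio, Finset.mem_coe, Finset.mem_range] at h1 h2
    rw [Function.onFun, Finset.disjoint_left]
    rintro n hn1 hn2
    simp only [gapD, Finset.mem_image, Finset.mem_Ico] at hn1 hn2
    obtain ⟨i1, ⟨hi11, hi12⟩, he1⟩ := hn1
    obtain ⟨i2, ⟨hi21, hi22⟩, he2⟩ := hn2
    have hq1 : qS s ≤ i1 * qS s := q_le_mul hi11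
    have hq2 : qS s ≤ i2 * qS s := q_le_mul hi21
    have heq : i1 * qS s + d2 = i2 * qS s + d1 := by
      set A := i1 * qS s with hA
      set B := i2 * qS s with hB
      omega
    obtain ⟨_, hdd⟩ := cancel_q s h1 h2 hi11 hi21 heq
    exact hne hdd

lemma sum_range_mul (f : ℕ → ℕ) (a b : ℕ) :
    ∑ d ∈ Finset.range (a * b), f d
      = ∑ i ∈ Finset.range a, ∑ j ∈ Finset.range b, f (i * b + j) := by
  induction a with
  | zero => simp
  | succ n ih =>
    rw [Nat.succ_mul, Finset.sum_range_add, ih, Finset.sum_range_succ]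

lemma Hv_formula (s : ℕ) (h2 : 2 ≤ q0 s) (j k l : ℕ) (hj : j < q0 s) (hl : l ≤ 1) :
    Hv s ((l + 2 * k) * q0 s + j)
      = j + k + l + (if q0 s ≤ j + k + l ∧ ¬(j = q0 s - 1 ∧ l = 1) then 2 else 1) := by
  have htv := tv_jkl s j k l hj hl
  have hFc := Fc_jkl s j k l hj hl
  unfold Hv
  by_cases hB : j = q0 s - 1 ∧ l = 1
  · rw [if_pos (Or.inr (hFc.mpr hB)), if_neg (by tauto), htv]
  · by_cases hA : q0 s ≤ j + k + l
    · rw [if_neg (by rw [htv, hFc]; omega), if_pos ⟨hA, hB⟩, htv]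
    · rw [if_pos (Or.inl (by rw [htv]; omega)), if_neg (by tauto), htv]

lemma inner_sum (s : ℕ) (h2 : 2 ≤ q0 s) (k l : ℕ) (hk : k < q0 s) (hl : l ≤ 1) :
    ∑ j ∈ Finset.range (q0 s), (Hv s ((l + 2 * k) * q0 s + j) - 1)
      = (∑ j ∈ Finset.range (q0 s), j) + q0 s * (k + l) + k := by
  have hcong : ∀ j ∈ Finset.range (q0 s), Hv s ((l + 2 * k) * q0 s + j) - 1
      = (j + (k + l)) + (if q0 s ≤ j + k + l ∧ ¬(j = q0 s - 1 ∧ l = 1) then 1 else 0) := by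
    intro j hj
    rw [Hv_formula s h2 j k l (Finset.mem_range.mp hj) hl]
    split_ifs <;> omega
  rw [Finset.sum_congr rfl hcong, Finset.sum_add_distrib, Finset.sum_add_distrib,
    Finset.sum_const, Finset.card_range, smul_eq_mul]
  have hfil : ((Finset.range (q0 s)).filter
      (fun j => q0 s ≤ j + k + l ∧ ¬(j = q0 s - 1 ∧ l = 1)))
      = Finset.Ico (q0 s - k - l) (q0 s - l) := by
    ext j
    simp only [Finset.mem_filter, Finset.mem_range, Finset.mem_Ico]
    omega
  have hsb : ∑ j ∈ Finset.range (q0 s),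
      (if q0 s ≤ j + k + l ∧ ¬(j = q0 s - 1 ∧ l = 1) then 1 else 0) = k := by
    rw [Finset.sum_ite, Finset.sum_const, Finset.sum_const_zero, add_zero, smul_eq_mul,
      mul_one, hfil, Nat.card_Ico]
    omega
  rw [hsb]

lemma sum_total (s : ℕ) (h2 : 2 ≤ q0 s) :
    ∑ d ∈ Finset.range (qS s), (Hv s d - 1) = q0 s * (qS s - 1) := by
  have hq : qS s = 2 * q0 s * q0 s := qS_eq s
  rw [hq, show 2 * q0 s * q0 s = (q0 s * 2) * q0 s from by ring, sum_range_mul]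
  rw [sum_range_mul]
  have hstep : ∀ k ∈ Finset.range (q0 s),
      (∑ l ∈ Finset.range 2, ∑ j ∈ Finset.range (q0 s), (Hv s ((k * 2 + l) * q0 s + j) - 1))
      = 2 * (∑ j ∈ Finset.range (q0 s), j) + q0 s + (2 * q0 s + 2) * k := by
    intro k hk
    have hk' : k < q0 s := Finset.mem_range.mp hk
    rw [Finset.sum_range_succ, Finset.sum_range_succ, Finset.sum_range_zero, zero_add]
    rw [show k * 2 + 0 = 0 + 2 * k from by ring, show k * 2 + 1 = 1 + 2 * k from by ring]
    rw [inner_sum s h2 k 0 hk' (by omega), inner_sum s h2 k 1 hk' (by omega)]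
    ring
  rw [Finset.sum_congr rfl hstep, Finset.sum_add_distrib, Finset.sum_const,
    Finset.card_range, smul_eq_mul, ← Finset.mul_sum]
  have hS0 : (∑ j ∈ Finset.range (q0 s), j) * 2 = q0 s * (q0 s - 1) :=
    Finset.sum_range_id_mul_two (q0 s)
  have hS0' : (∑ j ∈ Finset.range (q0 s), j) * 2 + q0 s = q0 s * q0 s := by
    have e1 : q0 s * (q0 s - 1) + q0 s = q0 s * (q0 s - 1 + 1) := by ring
    have e2 : q0 s - 1 + 1 = q0 s := by omega
    rw [e2] at e1
    omega
  have hq1 : 1 ≤ q0 s * 2 * q0 s := by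
    have h0 : 0 < q0 s * 2 * q0 s := by
      have := q0_pos s
      positivity
    omega
  zify [hq1]
  zify at hS0'
  set S0 : ℤ := ((∑ j ∈ Finset.range (q0 s), j : ℕ) : ℤ) with hS0def
  linear_combination (2 * (q0 s : ℤ) + 1) * hS0'

end Suz

/-- The complement in `ℕ` of `⟨F₁ ∪ F₂⟩` has exactly `g = q₀(q−1)` elements. -/
theorem stmt8 (s : ℕ) (hs : 1 ≤ s) :
    ((AddSubmonoid.closure (F1 s ∪ F2 s) : Set ℕ))ᶜ.ncard
      = q0 s * (qS s - 1) := by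
  have h2 := Suz.q0_two s hs
  rw [Suz.closure_eq s h2, Suz.compl_eq s h2, Set.ncard_coe_finset, Suz.card_gapF s,
    Suz.sum_total s h2]
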